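/- Let λ be a partition of length b and n > |λ| − λ_b. Then the number of partitions μ ⊆ λ with |μ| = n is at most the number of partitions ν ⊆ λ with |ν| = n − 1. Hence the coefficients of G_λ(q) are weakly decreasing from index |λ| − λ_b onward. -/

import Mathlib

open scoped Classical

/-- `subCount b lam n` is the number of partitions `μ ⊆ λ` of size `n`, where
`λ = (lam 0, …, lam (b-1))`. -/
noncomputable def subCount (b : ℕ) (lam : ℕ → ℕ) (n : ℕ) : ℕ :=
  ((Fintype.piFinset fun k : Fin b => Finset.range (lam k + 1)).filter
    (fun mu => (∀ j k : Fin b, j ≤ k → mu k ≤ mu j) ∧ (∑ k : Fin b, mu k) = n)).card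

/-- Let `λ` be a partition of length `b` (with positive parts).  For every
`n > |λ| - λ_b`, the number of partitions `μ ⊆ λ` of size `n` is at most the number
of partitions of size `n - 1`; hence the coefficients of `G_λ(q)` are weakly
decreasing from index `|λ| - λ_b` onward. -/
theorem stmt17 (b : ℕ) (hb : 0 < b) (lam : ℕ → ℕ)
    (hanti : ∀ i j, i ≤ j → j < b → lam j ≤ lam i)
    (hpos : 0 < lam (b - 1)) :
    (∀ n, (∑ i ∈ Finset.range b, lam i) - lam (b - 1) < n →
        subCount b lam n ≤ subCount b lam (n - 1)) ∧
    (∀ n m, (∑ i ∈ Finset.range b, lam i) - lam (b - 1) ≤ n → n ≤ m →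
        subCount b lam m ≤ subCount b lam n) := by
  classical
  have hB : b - 1 < b := by omega
  set B : Fin b := ⟨b - 1, hB⟩ with hBdef
  have hlamsum : ∑ k : Fin b, lam k = ∑ i ∈ Finset.range b, lam i := by
    rw [Finset.sum_range fun i => lam i]
  have key : ∀ n, (∑ i ∈ Finset.range b, lam i) - lam (b - 1) < n →
      subCount b lam n ≤ subCount b lam (n - 1) := by
    intro n hn
    unfold subCount
    set S := (Fintype.piFinset fun k : Fin b => Finset.range (lam k + 1)).filter
      (fun mu => (∀ j k : Fin b, j ≤ k → mu k ≤ mu j) ∧ (∑ k : Fin b, mu k) = n) with hS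
    -- every μ in S has μ B ≥ 1
    have hone : ∀ mu ∈ S, 1 ≤ mu B := by
      intro mu hmu
      rw [hS, Finset.mem_filter, Fintype.mem_piFinset] at hmu
      obtain ⟨hpi, hmono, hsum⟩ := hmu
      by_contra h
      push_neg at h
      have hmuB : mu B = 0 := by omega
      have hle : ∀ k ∈ Finset.univ.erase B, mu k ≤ lam k := by
        intro k _
        have := hpi k
        simp only [Finset.mem_range] at this
        omega
      have h1 : ∑ k ∈ Finset.univ.erase B, mu k ≤ ∑ k ∈ Finset.univ.erase B, lam k :=
        Finset.sum_le_sum hle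
      have h2 : ∑ k ∈ Finset.univ.erase B, mu k + mu B = ∑ k : Fin b, mu k :=
        Finset.sum_erase_add _ _ (Finset.mem_univ B)
      have h3 : ∑ k ∈ Finset.univ.erase B, lam k + lam B = ∑ k : Fin b, lam k :=
        Finset.sum_erase_add _ _ (Finset.mem_univ B)
      have hBval : lam B = lam (b - 1) := rfl
      omega
    apply Finset.card_le_card_of_injOn (fun mu => Function.update mu B (mu B - 1))
    · intro mu hmuS
      have hone' := hone mu hmuS
      rw [Finset.mem_coe, Finset.mem_filter, Fintype.mem_piFinset] at hmuS
      obtain ⟨hpi, hmono, hsum⟩ := hmuS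
      rw [Finset.mem_coe, Finset.mem_filter, Fintype.mem_piFinset]
      beta_reduce
      refine ⟨?_, ?_, ?_⟩
      · intro k
        have := hpi k
        simp only [Finset.mem_range] at this ⊢
        by_cases hk : k = B
        · subst hk; rw [Function.update_self]; omega
        · rw [Function.update_of_ne hk]; omega
      · intro j k hjk
        by_cases hk : k = B
        · subst hk
          have hjm := hmono j B hjk
          by_cases hj : j = B
          · subst hj; omega
          · rw [Function.update_self, Function.update_of_ne hj]; omega
        · have hkval : (k : ℕ) < b - 1 := by
            have := k.isLt
            have : (k : ℕ) ≠ b - 1 := fun h => hk (Fin.ext h)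
            omega
          have hj : j ≠ B := by
            intro h
            have : (j : ℕ) = b - 1 := by rw [h]
            have : (j : ℕ) ≤ (k : ℕ) := hjk
            omega
          rw [Function.update_of_ne hk, Function.update_of_ne hj]
          exact hmono j k hjk
      · have h2 : ∑ k ∈ Finset.univ.erase B, mu k + mu B = ∑ k : Fin b, mu k :=
          Finset.sum_erase_add _ _ (Finset.mem_univ B)
        have h4 : ∑ k ∈ Finset.univ.erase B, Function.update mu B (mu B - 1) k +
            Function.update mu B (mu B - 1) B = ∑ k : Fin b, Function.update mu B (mu B - 1) k :=
          Finset.sum_erase_add _ _ (Finset.mem_univ B)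
        have h5 : ∑ k ∈ Finset.univ.erase B, Function.update mu B (mu B - 1) k =
            ∑ k ∈ Finset.univ.erase B, mu k := by
          apply Finset.sum_congr rfl
          intro k hk
          rw [Function.update_of_ne (Finset.ne_of_mem_erase hk)]
        rw [Function.update_self] at h4
        omega
    · intro mu hmu nu hnu heq
      have h1 := hone mu hmu
      have h2 := hone nu hnu
      funext k
      have := congrFun heq k
      by_cases hk : k = B
      · subst hk
        simp only [Function.update_self] at this
        omega
      · simpa [Function.update_of_ne hk] using this
  refine ⟨key, ?_⟩
  intro n m h1 h2
  induction m, h2 using Nat.le_induction with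
  | base => exact le_refl _
  | succ m hm ih =>
    have := key (m + 1) (by omega)
    simpa using this.trans ih
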